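/- Let H = ℚ(v)[K,K⁻¹] be the group Hopf algebra of ℤ over ℚ(v), with K group-like. Define k_t = (1/[t]_v!)∏_{s=0}^{t-1} (v^{-s}K - v^s K⁻¹)/(v - v⁻¹). Then the comultiplication satisfies Δ(k_t) = Σ_{s=0}^{t} k_{t-s} K^{-s} ⊗ k_s K^{t-s} for all t ∈ ℕ. -/

import Mathlib

open Finset

/-- Balanced quantum integer `[s]_v = (v^s - v^{-s})/(v - v⁻¹)`. -/
noncomputable def qint {F : Type*} [Field F] (v : F) (s : ℕ) : F :=
  (v ^ (s : ℤ) - v ^ (-(s : ℤ))) / (v - v⁻¹)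

/-- Balanced quantum factorial `[n]_v! = ∏_{s=1}^n [s]_v`. -/
noncomputable def qfact {F : Type*} [Field F] (v : F) (n : ℕ) : F :=
  ∏ s ∈ Finset.Icc 1 n, qint v s

/-- Balanced Gaussian binomial coefficient `[n choose k]_v`, defined by the
balanced Pascal recursion `[n+1,k]_v = v^{-(n+1-k)}[n,k-1]_v + v^k [n,k]_v`. -/
noncomputable def qbinom {F : Type*} [Field F] (v : F) : ℕ → ℕ → F
  | _, 0 => 1
  | 0, _ + 1 => 0
  | n + 1, k + 1 =>
      v ^ (-((n : ℤ) - k)) * qbinom v n k + v ^ ((k : ℤ) + 1) * qbinom v n (k + 1)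

open TensorProduct

/-- The Laurent polynomial ring `ℚ(v)[K, K⁻¹]`, i.e. the group algebra of `ℤ` over `ℚ(v)`. -/
noncomputable abbrev H6 := MonoidAlgebra (RatFunc ℚ) (Multiplicative ℤ)

/-- The group-like element `K^n`. -/
noncomputable def Kz (n : ℤ) : H6 :=
  MonoidAlgebra.of (RatFunc ℚ) (Multiplicative ℤ) (Multiplicative.ofAdd n)

/-- `a_s = (v^{-s} K - v^s K⁻¹)/(v - v⁻¹)`. -/
noncomputable def a6 (s : ℤ) : H6 :=
  ((RatFunc.X : RatFunc ℚ) - (RatFunc.X : RatFunc ℚ)⁻¹)⁻¹ •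
    ((RatFunc.X : RatFunc ℚ) ^ (-s) • Kz 1 - (RatFunc.X : RatFunc ℚ) ^ s • Kz (-1))

/-- `k_t = (1/[t]_v!) ∏_{s=0}^{t-1} a_s`. -/
noncomputable def k6 (t : ℕ) : H6 :=
  (qfact (RatFunc.X : RatFunc ℚ) t)⁻¹ • ∏ s ∈ Finset.range t, a6 (s : ℤ)

section Aux

local notation "v" => (RatFunc.X : RatFunc ℚ)

lemma Kz_mul (m n : ℤ) : Kz m * Kz n = Kz (m+n) := by
  simp [Kz, ← map_mul, ← ofAdd_add]

lemma Xpow_ne_one (n : ℕ) (hn : 0 < n) : v ^ n ≠ 1 := by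
  intro h
  have h2 : (algebraMap (Polynomial ℚ) (RatFunc ℚ)) (Polynomial.X ^ n) = algebraMap _ _ 1 := by
    simpa [map_pow, RatFunc.algebraMap_X] using h
  have h3 := RatFunc.algebraMap_injective ℚ h2
  have := congrArg Polynomial.natDegree h3
  simp [Polynomial.natDegree_X_pow] at this
  omega

lemma hvv : v - v⁻¹ ≠ 0 := by
  intro h
  have h2 : v ^ 2 = 1 := by
    have := sub_eq_zero.mp h
    field_simp [RatFunc.X_ne_zero] at this
    linear_combination this
  exact Xpow_ne_one 2 (by norm_num) h2

lemma qint_ne_zero (s : ℕ) (hs : 0 < s) : qint v s ≠ 0 := by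
  have hnum : v ^ (s : ℤ) - v ^ (-(s : ℤ)) ≠ 0 := by
    intro h
    have := sub_eq_zero.mp h
    rw [zpow_natCast, zpow_neg, zpow_natCast] at this
    have h2 : v ^ (2*s) = 1 := by
      field_simp at this
      rw [eq_div_iff (pow_ne_zero s RatFunc.X_ne_zero)] at this
      rw [two_mul, pow_add, this]
    exact Xpow_ne_one (2*s) (by omega) h2
  exact div_ne_zero hnum hvv

lemma qfact_succ (n : ℕ) : qfact v (n+1) = qfact v n * qint v (n+1) := by
  rw [qfact, qfact, Finset.prod_Icc_succ_top (by omega)]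

lemma qfact_ne_zero (n : ℕ) : qfact v n ≠ 0 := by
  induction n with
  | zero => simp [qfact]
  | succ n ih => rw [qfact_succ]; exact mul_ne_zero ih (qint_ne_zero (n+1) (by omega))

lemma a6_eq (j : ℤ) : (v - v⁻¹) • a6 j = v^(-j) • Kz 1 - v^j • Kz (-1) := by
  rw [a6, smul_smul, mul_inv_cancel₀ hvv, one_smul]

lemma Kz1_eq (j : ℤ) : Kz 1 = (v^j*(v - v⁻¹)) • a6 j + v^(2*j) • Kz (-1) := by
  have h := a6_eq j
  have : v^j • ((v - v⁻¹) • a6 j) = v^j • (v^(-j) • Kz 1 - v^j • Kz (-1)) := by rw [h]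
  rw [smul_sub, smul_smul, smul_smul, smul_smul, ← zpow_add₀ RatFunc.X_ne_zero,
    add_neg_cancel, zpow_zero, one_smul, ← zpow_add₀ RatFunc.X_ne_zero] at this
  rw [show (2:ℤ)*j = j + j by ring, this]
  abel

lemma Kzm1_eq (j : ℤ) : Kz (-1) = v^(-(2*j)) • Kz 1 - (v^(-j)*(v - v⁻¹)) • a6 j := by
  have h := Kz1_eq j
  have : v^(-(2*j)) • Kz 1 = v^(-(2*j)) • ((v^j*(v - v⁻¹)) • a6 j + v^(2*j) • Kz (-1)) := by
    rw [← h]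
  rw [smul_add, smul_smul, smul_smul, ← zpow_add₀ RatFunc.X_ne_zero, neg_add_cancel,
    zpow_zero, one_smul, ← mul_assoc, ← zpow_add₀ RatFunc.X_ne_zero] at this
  rw [this, show -(2*j) + j = -j by ring]
  abel

lemma k6_mul_a6 (m : ℕ) : k6 m * a6 m = qint v (m+1) • k6 (m+1) := by
  rw [k6, k6, smul_mul_assoc, Finset.prod_range_succ, smul_smul]
  congr 1
  rw [qfact_succ]
  field_simp
  rw [mul_comm, ← div_div, div_self (qint_ne_zero (m+1) (by omega))]

lemma sub1 (m : ℕ) : k6 m * Kz 1 =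
    (v^(m:ℤ)*(v - v⁻¹)*qint v (m+1)) • k6 (m+1) + v^(2*(m:ℤ)) • (k6 m * Kz (-1)) := by
  rw [Kz1_eq (m:ℤ), mul_add, mul_smul_comm, mul_smul_comm, k6_mul_a6, smul_smul, mul_assoc]

lemma sub2 (m : ℕ) : k6 m * Kz (-1) =
    v^(-(2*(m:ℤ))) • (k6 m * Kz 1) - (v^(-(m:ℤ))*(v - v⁻¹)*qint v (m+1)) • k6 (m+1) := by
  rw [Kzm1_eq (m:ℤ), mul_sub, mul_smul_comm, mul_smul_comm, k6_mul_a6, smul_smul, mul_assoc]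


lemma scal1 (x y : ℤ) (c : RatFunc ℚ) :
    (v-v⁻¹)⁻¹ * (v^x * (v^y * (v * c - v⁻¹ * c))) = v^(x+y) * c := by
  calc (v-v⁻¹)⁻¹ * (v^x * (v^y * (v * c - v⁻¹ * c)))
      = ((v-v⁻¹)⁻¹ * (v-v⁻¹)) * (v^x * v^y * c) := by ring
    _ = v^(x+y) * c := by rw [inv_mul_cancel₀ hvv, one_mul, ← zpow_add₀ RatFunc.X_ne_zero]


lemma aux6 {M : Type*} [AddCommGroup M] [Module (RatFunc ℚ) M] (x y z : M)
    (c1 c2 c3 c4 d1 d2 : RatFunc ℚ) (h1 : c1 = d1) (h2 : c2 = c3) (h3 : c4 = d2) :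
    c1 • x + c2 • y - (c3 • y - c4 • z) = d1 • x + d2 • z := by
  rw [h1, h2, h3]; abel

noncomputable def D6 (t : ℤ) : H6 ⊗[RatFunc ℚ] H6 :=
  (v - v⁻¹)⁻¹ • (v^(-t) • (Kz 1 ⊗ₜ[RatFunc ℚ] Kz 1) - v^t • (Kz (-1) ⊗ₜ[RatFunc ℚ] Kz (-1)))

set_option synthInstance.maxHeartbeats 1000000 in
set_option maxHeartbeats 1000000 in
lemma step (a s : ℕ) :
    ((k6 a * Kz (-(s:ℤ))) ⊗ₜ[RatFunc ℚ] (k6 s * Kz (a:ℤ))) * D6 ((a:ℤ)+(s:ℤ)) =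
      (v^(-(s:ℤ)) * qint v (a+1)) • ((k6 (a+1) * Kz (-(s:ℤ))) ⊗ₜ[RatFunc ℚ] (k6 s * Kz ((a:ℤ)+1)))
    + (v^((a:ℤ)) * qint v (s+1)) • ((k6 a * Kz (-((s:ℤ)+1))) ⊗ₜ[RatFunc ℚ] (k6 (s+1) * Kz ((a:ℤ)))) := by
  have e1 : k6 a * Kz (-(s:ℤ)) * Kz 1 = (k6 a * Kz 1) * Kz (-(s:ℤ)) := by
    rw [mul_assoc, Kz_mul, mul_assoc, Kz_mul, show (1:ℤ) + -(s:ℤ) = -(s:ℤ) + 1 by ring]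
  have e2 : k6 s * Kz (a:ℤ) * Kz 1 = k6 s * Kz ((a:ℤ)+1) := by rw [mul_assoc, Kz_mul]
  have e3 : k6 a * Kz (-(s:ℤ)) * Kz (-1) = k6 a * Kz (-((s:ℤ)+1)) := by
    rw [mul_assoc, Kz_mul, show -(s:ℤ) + -1 = -((s:ℤ)+1) by ring]
  have e4 : k6 s * Kz (a:ℤ) * Kz (-1) = (k6 s * Kz (-1)) * Kz (a:ℤ) := by
    rw [mul_assoc, Kz_mul, mul_assoc, Kz_mul, show -(1:ℤ) + (a:ℤ) = (a:ℤ) + -1 by ring]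
  rw [D6, mul_smul_comm, mul_sub, mul_smul_comm, mul_smul_comm,
    Algebra.TensorProduct.tmul_mul_tmul, Algebra.TensorProduct.tmul_mul_tmul,
    e1, e2, e3, e4, sub1 a, sub2 s]
  simp only [add_mul, sub_mul, smul_mul_assoc, mul_assoc, Kz_mul]
  rw [show (-1 + -(s:ℤ)) = -((s:ℤ)+1) by ring, show (1 + (a:ℤ)) = (a:ℤ)+1 by ring]
  simp only [add_tmul, sub_tmul, tmul_add, tmul_sub, ← smul_tmul', tmul_smul, smul_sub, smul_add, smul_smul]
  refine aux6 _ _ _ _ _ _ _ _ _ ?_ ?_ ?_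
  · rw [scal1]
    congr 2
    ring
  · rw [← zpow_add₀ (RatFunc.X_ne_zero (K := ℚ)), ← zpow_add₀ (RatFunc.X_ne_zero (K := ℚ))]
    congr 2
    ring
  · rw [scal1]
    congr 2
    ring

lemma qid (a b : ℕ) : v^(-(b:ℤ)) * qint v a + v^((a:ℤ)) * qint v b = qint v (a+b) := by
  simp only [qint]
  rw [mul_div_assoc', mul_div_assoc', ← add_div]
  congr 1
  push_cast
  rw [zpow_add₀ (RatFunc.X_ne_zero (K := ℚ)), show -((a:ℤ)+b) = -(a:ℤ) + -(b:ℤ) by ring,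
    zpow_add₀ (RatFunc.X_ne_zero (K := ℚ))]
  ring

lemma key (t : ℕ) :
    (∑ s ∈ Finset.range (t+1),
        (k6 (t-s) * Kz (-(s:ℤ))) ⊗ₜ[RatFunc ℚ] (k6 s * Kz ((t:ℤ)-s))) * D6 (t:ℤ)
    = qint v (t+1) • ∑ s ∈ Finset.range (t+2),
        (k6 (t+1-s) * Kz (-(s:ℤ))) ⊗ₜ[RatFunc ℚ] (k6 s * Kz ((t:ℤ)+1-s)) := by
  rw [Finset.sum_mul, Finset.smul_sum]
  have hterm : ∀ s ∈ Finset.range (t+1),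
      ((k6 (t-s) * Kz (-(s:ℤ))) ⊗ₜ[RatFunc ℚ] (k6 s * Kz ((t:ℤ)-s))) * D6 (t:ℤ)
      = (v^(-(s:ℤ)) * qint v (t-s+1)) •
          ((k6 (t-s+1) * Kz (-(s:ℤ))) ⊗ₜ[RatFunc ℚ] (k6 s * Kz ((t:ℤ)-s+1)))
      + (v^((t:ℤ)-s) * qint v (s+1)) •
          ((k6 (t-s) * Kz (-((s:ℤ)+1))) ⊗ₜ[RatFunc ℚ] (k6 (s+1) * Kz ((t:ℤ)-s))) := by
    intro s hs
    have hs' : s ≤ t := by simp at hs; omega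
    have hcast : ((t - s : ℕ) : ℤ) = (t:ℤ) - s := by
      rw [Nat.cast_sub hs']
    have h := step (t-s) s
    rw [hcast, show (t:ℤ)-s+s = (t:ℤ) by ring] at h
    exact h
  rw [Finset.sum_congr rfl hterm, Finset.sum_add_distrib]
  rw [Finset.sum_range_succ' (fun s => (v^(-(s:ℤ)) * qint v (t-s+1)) •
        ((k6 (t-s+1) * Kz (-(s:ℤ))) ⊗ₜ[RatFunc ℚ] (k6 s * Kz ((t:ℤ)-s+1)))) t]
  rw [Finset.sum_range_succ (fun s => (v^((t:ℤ)-s) * qint v (s+1)) •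
        ((k6 (t-s) * Kz (-((s:ℤ)+1))) ⊗ₜ[RatFunc ℚ] (k6 (s+1) * Kz ((t:ℤ)-s)))) t]
  rw [Finset.sum_range_succ' (fun s => qint v (t+1) •
        ((k6 (t+1-s) * Kz (-(s:ℤ))) ⊗ₜ[RatFunc ℚ] (k6 s * Kz ((t:ℤ)+1-s)))) (t+1)]
  rw [Finset.sum_range_succ (fun s => qint v (t+1) •
        ((k6 (t+1-(s+1)) * Kz (-((s+1:ℕ):ℤ))) ⊗ₜ[RatFunc ℚ] (k6 (s+1) * Kz ((t:ℤ)+1-((s+1:ℕ):ℤ))))) t]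
  have h0 : (v^(-((0:ℕ):ℤ)) * qint v (t-0+1)) •
      ((k6 (t-0+1) * Kz (-((0:ℕ):ℤ))) ⊗ₜ[RatFunc ℚ] (k6 0 * Kz ((t:ℤ)-((0:ℕ):ℤ)+1)))
      = qint v (t+1) • ((k6 (t+1-0) * Kz (-((0:ℕ):ℤ))) ⊗ₜ[RatFunc ℚ] (k6 0 * Kz ((t:ℤ)+1-((0:ℕ):ℤ)))) := by
    norm_num
  have htop : (v^((t:ℤ)-(t:ℤ)) * qint v (t+1)) •
      ((k6 (t-t) * Kz (-((t:ℤ)+1))) ⊗ₜ[RatFunc ℚ] (k6 (t+1) * Kz ((t:ℤ)-(t:ℤ))))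
      = qint v (t+1) • ((k6 (t+1-(t+1)) * Kz (-(((t+1:ℕ)):ℤ))) ⊗ₜ[RatFunc ℚ]
          (k6 (t+1) * Kz ((t:ℤ)+1-(((t+1:ℕ)):ℤ)))) := by
    push_cast
    rw [show (t:ℤ)-(t:ℤ) = (t:ℤ)+1-((t:ℤ)+1) by ring, show t-t = t+1-(t+1) from by omega]
    norm_num
  have hmid : ∀ x ∈ Finset.range t,
      (v^(-(((x+1:ℕ)):ℤ)) * qint v (t-(x+1)+1)) •
        ((k6 (t-(x+1)+1) * Kz (-(((x+1:ℕ)):ℤ))) ⊗ₜ[RatFunc ℚ] (k6 (x+1) * Kz ((t:ℤ)-(((x+1:ℕ)):ℤ)+1)))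
      + (v^((t:ℤ)-(x:ℤ)) * qint v (x+1)) •
        ((k6 (t-x) * Kz (-((x:ℤ)+1))) ⊗ₜ[RatFunc ℚ] (k6 (x+1) * Kz ((t:ℤ)-(x:ℤ))))
      = qint v (t+1) • ((k6 (t+1-(x+1)) * Kz (-(((x+1:ℕ)):ℤ))) ⊗ₜ[RatFunc ℚ]
          (k6 (x+1) * Kz ((t:ℤ)+1-(((x+1:ℕ)):ℤ)))) := by
    intro x hx
    have hx' : x < t := by simpa using hx
    have e : t-(x+1)+1 = t-x := by omega
    push_cast
    rw [e, show (t:ℤ)-((x:ℤ)+1)+1 = (t:ℤ)-(x:ℤ) by ring,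
      show (t:ℤ)+1-((x:ℤ)+1) = (t:ℤ)-(x:ℤ) by ring, ← add_smul]
    congr 1
    have h := qid (t-x) (x+1)
    push_cast [Nat.cast_sub hx'.le] at h
    rw [show t-x+(x+1) = t+1 from by omega] at h
    exact h
  have hAB := Finset.sum_congr rfl hmid
  rw [Finset.sum_add_distrib] at hAB
  rw [h0, htop, ← hAB]
  abel

lemma Kz_zero : Kz 0 = 1 := by simp [Kz]; rfl

lemma DeltaK (Δ : H6 →ₐ[RatFunc ℚ] (H6 ⊗[RatFunc ℚ] H6))
    (hΔ : Δ (Kz 1) = Kz 1 ⊗ₜ[RatFunc ℚ] Kz 1) (n : ℤ) :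
    Δ (Kz n) = Kz n ⊗ₜ[RatFunc ℚ] Kz n := by
  have hm1 : Δ (Kz (-1)) = Kz (-1) ⊗ₜ[RatFunc ℚ] Kz (-1) := by
    have h1 : Δ (Kz (-1)) * Δ (Kz 1) = 1 := by
      rw [← map_mul, Kz_mul]; norm_num; rw [Kz_zero, map_one]
    have h2 : (Kz (-1) ⊗ₜ[RatFunc ℚ] Kz (-1)) * (Kz 1 ⊗ₜ[RatFunc ℚ] Kz 1) = 1 := by
      rw [Algebra.TensorProduct.tmul_mul_tmul, Kz_mul]
      norm_num [Kz_zero]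
      rfl
    calc Δ (Kz (-1)) = Δ (Kz (-1)) * ((Kz 1 ⊗ₜ[RatFunc ℚ] Kz 1) * (Kz (-1) ⊗ₜ[RatFunc ℚ] Kz (-1))) := by
          rw [mul_comm (Kz 1 ⊗ₜ[RatFunc ℚ] Kz 1), h2, mul_one]
      _ = (Δ (Kz (-1)) * Δ (Kz 1)) * (Kz (-1) ⊗ₜ[RatFunc ℚ] Kz (-1)) := by
          rw [hΔ]; ring
      _ = Kz (-1) ⊗ₜ[RatFunc ℚ] Kz (-1) := by rw [h1, one_mul]
  induction n using Int.induction_on with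
  | zero => rw [Kz_zero, map_one, Algebra.TensorProduct.one_def]
  | succ k ih =>
      rw [← Kz_mul, map_mul, ih, hΔ, Algebra.TensorProduct.tmul_mul_tmul, Kz_mul]
  | pred k ih =>
      rw [show -(k:ℤ) - 1 = -k + -1 by ring, ← Kz_mul, map_mul, ih, hm1,
        Algebra.TensorProduct.tmul_mul_tmul, Kz_mul]

lemma Delta_a6 (Δ : H6 →ₐ[RatFunc ℚ] (H6 ⊗[RatFunc ℚ] H6))
    (hΔ : Δ (Kz 1) = Kz 1 ⊗ₜ[RatFunc ℚ] Kz 1) (j : ℤ) : Δ (a6 j) = D6 j := by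
  rw [a6, D6, map_smul, map_sub, map_smul, map_smul, DeltaK Δ hΔ 1, DeltaK Δ hΔ (-1)]

lemma DeltaP (Δ : H6 →ₐ[RatFunc ℚ] (H6 ⊗[RatFunc ℚ] H6))
    (hΔ : Δ (Kz 1) = Kz 1 ⊗ₜ[RatFunc ℚ] Kz 1) (t : ℕ) :
    Δ (∏ s ∈ Finset.range t, a6 (s:ℤ)) =
      qfact v t • ∑ s ∈ Finset.range (t+1),
        (k6 (t-s) * Kz (-(s:ℤ))) ⊗ₜ[RatFunc ℚ] (k6 s * Kz ((t:ℤ)-s)) := by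
  induction t with
  | zero =>
      have hq : qfact v 0 = 1 := by simp [qfact]
      have hk : k6 0 = 1 := by simp [k6, hq]
      simp [hq, hk, Kz_zero, Algebra.TensorProduct.one_def]
  | succ t ih =>
      rw [Finset.prod_range_succ, map_mul, ih, Delta_a6 Δ hΔ, smul_mul_assoc, key t,
        smul_smul, ← qfact_succ]
      push_cast
      rfl

end Aux

/-- The comultiplication of the group Hopf algebra `ℚ(v)[ℤ]` satisfies
`Δ(k_t) = Σ_{s=0}^{t} k_{t-s} K^{-s} ⊗ k_s K^{t-s}`. -/
theorem stmt_6 (Δ : H6 →ₐ[RatFunc ℚ] (H6 ⊗[RatFunc ℚ] H6))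
    (hΔ : Δ (Kz 1) = Kz 1 ⊗ₜ[RatFunc ℚ] Kz 1) (t : ℕ) :
    Δ (k6 t) =
      ∑ s ∈ Finset.range (t + 1),
        (k6 (t - s) * Kz (-(s : ℤ))) ⊗ₜ[RatFunc ℚ] (k6 s * Kz ((t : ℤ) - s)) := by
  rw [k6, map_smul, DeltaP Δ hΔ t, smul_smul, inv_mul_cancel₀ (qfact_ne_zero t), one_smul]
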